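/- arXiv:2503.24373 — 2 statements merged into one kernel-verified Lean document; each statement's English description precedes it below -/
import Mathlib

section
/- Let 1 < q ≤ 2, let d ≥ 1, and let x, y ∈ ℝ^d with all entries of x strictly positive and all entries of y nonnegative. Let G = Σ_{j=1}^d γ_q(y_j; x_j), where γ_q(y; f) = (q/2)f^{q−2}y² if |y| ≤ f and |y|^q − (1 − q/2)f^q otherwise. Then q·Σ_{j=1}^d x_j^{q−1}·y_j ≤ √(2q)·‖x‖_q^{q/2}·√G + q·‖x‖_q^{q−1}·G^{1/q}. -/
noncomputable def gammaQ (q x f : ℝ) : ℝ :=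
  if |x| ≤ f then (q / 2) * f ^ (q - 2) * x ^ 2 else |x| ^ q - (1 - q / 2) * f ^ q

open Real

lemma gammaQ_nonneg {q x f : ℝ} (hq1 : 1 < q) (hq2 : q ≤ 2) (hf : 0 < f) (hx : 0 ≤ x) :
    0 ≤ gammaQ q x f := by
  unfold gammaQ
  split_ifs with h
  · positivity
  · push_neg at h
    rw [abs_of_nonneg hx] at h ⊢
    have h1 : f ^ q ≤ x ^ q := Real.rpow_le_rpow hf.le h.le (by linarith)
    nlinarith [Real.rpow_pos_of_pos hf q]

lemma key (q x y : ℝ) (hq1 : 1 < q) (hq2 : q ≤ 2) (hx : 0 < x) (hy : 0 ≤ y) :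
    q * (x ^ (q - 1) * y) ≤
      Real.sqrt (2 * q) * (x ^ (q / 2) * Real.sqrt (gammaQ q y x)) +
        q * (x ^ (q - 1) * gammaQ q y x ^ (1 / q)) := by
  have hq0 : (0:ℝ) < q := by linarith
  unfold gammaQ
  rw [abs_of_nonneg hy]
  split_ifs with h
  · -- y ≤ x : equality in first term
    have h1 : Real.sqrt ((q / 2) * x ^ (q - 2) * y ^ 2) =
        Real.sqrt (q / 2) * (x ^ ((q - 2) / 2) * y) := by
      rw [Real.sqrt_mul (by positivity), Real.sqrt_mul (by positivity),
        Real.sqrt_sq hy, Real.sqrt_eq_rpow (x ^ (q-2)), ← Real.rpow_mul hx.le]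
      ring_nf
    have h2 : Real.sqrt (2 * q) * Real.sqrt (q / 2) = q := by
      rw [← Real.sqrt_mul (by positivity)]
      rw [show 2 * q * (q / 2) = q ^ 2 by ring, Real.sqrt_sq hq0.le]
    have h3 : x ^ (q / 2) * x ^ ((q - 2) / 2) = x ^ (q - 1) := by
      rw [← Real.rpow_add hx]; ring_nf
    have h4 : 0 ≤ q * (x ^ (q - 1) * ((q / 2) * x ^ (q - 2) * y ^ 2) ^ (1 / q)) := by
      positivity
    calc q * (x ^ (q - 1) * y)
        = Real.sqrt (2 * q) * (x ^ (q / 2) * Real.sqrt ((q / 2) * x ^ (q - 2) * y ^ 2)) := by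
          rw [h1, show Real.sqrt (2*q)*(x^(q/2)*(Real.sqrt (q/2)*(x^((q-2)/2)*y))) =
            (Real.sqrt (2*q)*Real.sqrt (q/2))*((x^(q/2)*x^((q-2)/2))*y) from by ring, h2, h3]
      _ ≤ _ := le_add_of_nonneg_right h4
  · -- x < y
    push_neg at h
    have hy0 : 0 < y := lt_trans hx h
    set γ : ℝ := y ^ q - (1 - q / 2) * x ^ q with hγdef
    have hxq : 0 < x ^ q := Real.rpow_pos_of_pos hx q
    have hxy : x ^ q ≤ y ^ q := Real.rpow_le_rpow hx.le h.le hq0.le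
    have hγx : q / 2 * x ^ q ≤ γ := by rw [hγdef]; nlinarith
    have hγ0 : 0 < γ := lt_of_lt_of_le (by positivity) hγx
    have hγy : γ ≤ y ^ q := by rw [hγdef]; nlinarith
    -- Bernoulli / tangent line: y ≤ γ^(1/q) + (1/q)*(y^q - γ) * γ^(1/q - 1)
    have tangent : y ≤ γ ^ (1/q) + (1/q) * (y ^ q - γ) * γ ^ (1/q - 1) := by
      have hs : (-1:ℝ) ≤ (y ^ q - γ) / γ :=
        le_trans (by norm_num) (div_nonneg (by linarith) hγ0.le)
      have hber := rpow_one_add_le_one_add_mul_self hs (by positivity) (by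
        rw [div_le_one hq0] at *; linarith) (p := 1/q)
      have h1s : 1 + (y ^ q - γ) / γ = y ^ q / γ := by field_simp; ring
      rw [h1s] at hber
      have hdiv : (y ^ q / γ) ^ (1/q) = y / γ ^ (1/q) := by
        rw [Real.div_rpow (by positivity) hγ0.le, ← Real.rpow_mul hy0.le,
          mul_one_div, div_self hq0.ne', Real.rpow_one]
      rw [hdiv] at hber
      have hγq : 0 < γ ^ (1/q) := Real.rpow_pos_of_pos hγ0 _
      rw [div_le_iff₀ hγq] at hber
      calc y ≤ (1 + 1/q * ((y ^ q - γ) / γ)) * γ ^ (1/q) := hber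
        _ = γ ^ (1/q) + (1/q) * (y ^ q - γ) * (γ ^ (1/q) / γ) := by field_simp
        _ = γ ^ (1/q) + (1/q) * (y ^ q - γ) * γ ^ (1/q - 1) := by
            rw [Real.rpow_sub hγ0, Real.rpow_one]
    have hrem : (1 - q/2) * x ^ q * x ^ (q-1) * γ ^ (1/q - 1) ≤
        Real.sqrt (2*q) * (x ^ (q/2) * Real.sqrt γ) := by
      have hc : γ ^ (1/q - 1) = γ ^ (1/q - 3/2) * γ ^ ((1:ℝ)/2) := by
        rw [← Real.rpow_add hγ0]; ring_nf
      have hhalf : (1:ℝ)/2 ≤ 1/q := by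
        rw [div_le_div_iff₀ (by norm_num) hq0]; linarith
      have h1q : 1/q ≤ 1 := by rw [div_le_one hq0]; linarith
      have hmono : γ ^ (1/q - 3/2) ≤ (q/2 * x ^ q) ^ (1/q - 3/2) :=
        Real.rpow_le_rpow_of_nonpos (by positivity) hγx (by linarith)
      have hsplit : (q/2 * x ^ q) ^ (1/q - 3/2) =
          (q/2) ^ (1/q - 3/2) * x ^ (q * (1/q - 3/2)) := by
        rw [Real.mul_rpow (by positivity) hxq.le, ← Real.rpow_mul hx.le]
      have hconst : (q/2) ^ (1/q - 3/2) ≤ 2/q := by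
        have h1 : (q/2) ^ (1/q - 3/2) ≤ (q/2) ^ (-1:ℝ) :=
          Real.rpow_le_rpow_of_exponent_ge (by positivity) (by linarith) (by linarith)
        have h2 : (q/2) ^ (-1:ℝ) = 2/q := by
          rw [Real.rpow_neg_one]; field_simp
        linarith
      have hone : (1:ℝ) ≤ Real.sqrt (2*q) := by
        rw [show (1:ℝ) = Real.sqrt 1 from Real.sqrt_one.symm]
        exact Real.sqrt_le_sqrt (by linarith)
      have hcc : (1 - q/2) * (2/q) ≤ 1 := by
        rw [show (1 - q/2) * (2/q) = 2/q - 1 from by field_simp]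
        have : 2/q ≤ 2 := by rw [div_le_iff₀ hq0]; nlinarith
        linarith
      have hq2' : 0 ≤ 1 - q/2 := by linarith
      have hmerge : x ^ (q * (1/q - 3/2)) * (x ^ q * x ^ (q-1)) = x ^ (q/2) := by
        rw [← Real.rpow_add hx, ← Real.rpow_add hx]
        congr 1
        field_simp
        ring
      calc (1 - q/2) * x ^ q * x ^ (q-1) * γ ^ (1/q - 1)
          = (1 - q/2) * γ ^ (1/q - 3/2) * (x ^ q * x ^ (q-1) * γ ^ ((1:ℝ)/2)) := by
            rw [hc]; ring
        _ ≤ (1 - q/2) * ((q/2) ^ (1/q - 3/2) * x ^ (q * (1/q - 3/2))) *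
              (x ^ q * x ^ (q-1) * γ ^ ((1:ℝ)/2)) := by
            rw [← hsplit]
            gcongr
        _ = ((1 - q/2) * (q/2) ^ (1/q - 3/2)) *
              ((x ^ (q * (1/q - 3/2)) * (x ^ q * x ^ (q-1))) * γ ^ ((1:ℝ)/2)) := by ring
        _ ≤ Real.sqrt (2*q) * (x ^ (q/2) * γ ^ ((1:ℝ)/2)) := by
            rw [hmerge]
            have hcb : (1 - q/2) * (q/2) ^ (1/q - 3/2) ≤ Real.sqrt (2*q) := by
              have := mul_le_mul_of_nonneg_left hconst hq2'
              nlinarith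
            gcongr
        _ = Real.sqrt (2*q) * (x ^ (q/2) * Real.sqrt γ) := by
            rw [Real.sqrt_eq_rpow γ]
    have hxq1 : (0:ℝ) ≤ x ^ (q-1) := (Real.rpow_pos_of_pos hx _).le
    have hfin := mul_le_mul_of_nonneg_left tangent (by positivity : (0:ℝ) ≤ q * x ^ (q-1))
    have hyqγ : y ^ q - γ = (1 - q/2) * x ^ q := by rw [hγdef]; ring
    calc q * (x ^ (q-1) * y)
        ≤ q * x ^ (q-1) * (γ ^ (1/q) + 1/q * (y ^ q - γ) * γ ^ (1/q - 1)) := by rw [mul_assoc] at hfin; exact hfin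
      _ = q * (x ^ (q-1) * γ ^ (1/q)) + (1 - q/2) * x ^ q * x ^ (q-1) * γ ^ (1/q-1) := by
          rw [hyqγ]; field_simp
      _ ≤ q * (x ^ (q-1) * γ ^ (1/q)) + Real.sqrt (2*q) * (x ^ (q/2) * Real.sqrt γ) := by
          linarith
      _ = _ := by ring

theorem stmt5 (q : ℝ) (hq1 : 1 < q) (hq2 : q ≤ 2) (d : ℕ) (hd : 1 ≤ d)
    (x y : Fin d → ℝ) (hx : ∀ j, 0 < x j) (hy : ∀ j, 0 ≤ y j) :
    q * ∑ j, x j ^ (q - 1) * y j ≤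
      Real.sqrt (2 * q) * ((∑ j, x j ^ q) ^ (1 / q)) ^ (q / 2) *
        Real.sqrt (∑ j, gammaQ q (y j) (x j)) +
      q * ((∑ j, x j ^ q) ^ (1 / q)) ^ (q - 1) *
        (∑ j, gammaQ q (y j) (x j)) ^ (1 / q) := by
  have hq0 : (0:ℝ) < q := by linarith
  haveI : Nonempty (Fin d) := ⟨⟨0, hd⟩⟩
  set γ : Fin d → ℝ := fun j => gammaQ q (y j) (x j) with hγ
  have hγn : ∀ j, 0 ≤ γ j := fun j => gammaQ_nonneg hq1 hq2 (hx j) (hy j)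
  set S : ℝ := ∑ j, x j ^ q with hSdef
  set G : ℝ := ∑ j, γ j with hGdef
  have hS : 0 < S := Finset.sum_pos (fun j _ => Real.rpow_pos_of_pos (hx j) q)
    Finset.univ_nonempty
  have hG : 0 ≤ G := Finset.sum_nonneg fun j _ => hγn j
  -- Cauchy-Schwarz
  have hCS : (∑ j, x j ^ (q/2) * Real.sqrt (γ j)) ≤ Real.sqrt S * Real.sqrt G := by
    have heq : ∀ j : Fin d, x j ^ (q/2) = Real.sqrt (x j ^ q) := by
      intro j
      rw [Real.sqrt_eq_rpow, ← Real.rpow_mul (hx j).le]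
      ring_nf
    calc (∑ j, x j ^ (q/2) * Real.sqrt (γ j))
        = ∑ j, Real.sqrt (x j ^ q) * Real.sqrt (γ j) := by
          exact Finset.sum_congr rfl fun j _ => by rw [heq j]
      _ ≤ Real.sqrt S * Real.sqrt G :=
          Real.sum_sqrt_mul_sqrt_le _ (fun j => (Real.rpow_pos_of_pos (hx j) q).le) hγn
  -- Hölder
  have hpq : Real.HolderConjugate (q/(q-1)) q := by
    rw [Real.holderConjugate_iff]
    constructor
    · rw [lt_div_iff₀ (by linarith)]; linarith
    · rw [inv_div]
      field_simp; ring
  have hHol : (∑ j, x j ^ (q-1) * γ j ^ (1/q)) ≤ S ^ ((q-1)/q) * G ^ (1/q) := by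
    have := Real.inner_le_Lp_mul_Lq_of_nonneg Finset.univ hpq
      (f := fun j => x j ^ (q-1)) (g := fun j => γ j ^ (1/q))
      (fun j _ => (Real.rpow_pos_of_pos (hx j) _).le)
      (fun j _ => Real.rpow_nonneg (hγn j) _)
    have e1 : ∀ j : Fin d, (x j ^ (q-1)) ^ (q/(q-1)) = x j ^ q := by
      intro j
      rw [← Real.rpow_mul (hx j).le]
      congr 1
      field_simp
      exact div_self (sub_ne_zero.mpr hq1.ne')
    have e2 : ∀ j : Fin d, (γ j ^ (1/q)) ^ q = γ j := by
      intro j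
      rw [← Real.rpow_mul (hγn j), one_div_mul_cancel hq0.ne', Real.rpow_one]
    simp only [e1, e2] at this
    rw [one_div_div] at this
    exact this
  -- exponent conversions
  have c1 : (S ^ (1/q)) ^ (q/2) = Real.sqrt S := by
    rw [← Real.rpow_mul hS.le, show (1/q)*(q/2) = (1:ℝ)/2 from by field_simp,
      Real.sqrt_eq_rpow]
  have c2 : (S ^ (1/q)) ^ (q-1) = S ^ ((q-1)/q) := by
    rw [← Real.rpow_mul hS.le, show (1/q)*(q-1) = (q-1)/q from by ring]
  rw [c1, c2]
  calc q * ∑ j, x j ^ (q-1) * y j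
      = ∑ j, q * (x j ^ (q-1) * y j) := by rw [Finset.mul_sum]
    _ ≤ ∑ j, (Real.sqrt (2*q) * (x j ^ (q/2) * Real.sqrt (γ j)) +
          q * (x j ^ (q-1) * γ j ^ (1/q))) :=
        Finset.sum_le_sum fun j _ => key q (x j) (y j) hq1 hq2 (hx j) (hy j)
    _ = Real.sqrt (2*q) * (∑ j, x j ^ (q/2) * Real.sqrt (γ j)) +
          q * (∑ j, x j ^ (q-1) * γ j ^ (1/q)) := by
        rw [Finset.sum_add_distrib, ← Finset.mul_sum, ← Finset.mul_sum]
    _ ≤ Real.sqrt (2*q) * (Real.sqrt S * Real.sqrt G) +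
          q * (S ^ ((q-1)/q) * G ^ (1/q)) :=
        add_le_add (mul_le_mul_of_nonneg_left hCS (Real.sqrt_nonneg _))
          (mul_le_mul_of_nonneg_left hHol hq0.le)
    _ = _ := by ring
end

section
/- Let 1 < q ≤ 2 ≤ p and let x, y ∈ ℝ^d with all entries of x strictly positive. Then ‖x + y‖_q^{pq} − ‖x‖_q^{pq} − pq·‖x‖_q^{(p−1)q}·Σ_{j=1}^d x_j^{q−1}·y_j ≥ (p(q−1)/20)·‖x‖_q^{(p−1)q}·Σ_{j=1}^d γ_q(y_j; x_j) + ((q−1)/100)^p·(Σ_{j=1}^d γ_q(y_j; x_j))^p. -/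
noncomputable def normQ (q : ℝ) {d : ℕ} (x : Fin d → ℝ) : ℝ :=
  (∑ j, |x j| ^ q) ^ (1 / q)

open Real Set

section Aux
variable {q : ℝ}
lemma superadd {x y p : ℝ} (hx : 0 ≤ x) (hy : 0 ≤ y) (hp : 1 ≤ p) :
    x ^ p + y ^ p ≤ (x + y) ^ p := by
  lift x to NNReal using hx
  lift y to NNReal using hy
  exact_mod_cast NNReal.add_rpow_le_rpow_add x y hp

lemma lemC {a b p : ℝ} (ha : 0 ≤ a) (hb : 0 ≤ b) (hp : 2 ≤ p) :
    b ^ p + p * b ^ (p - 1) * (a - b) ≤ a ^ p := by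
  rcases eq_or_lt_of_le hb with h0 | hb0
  · rw [← h0, Real.zero_rpow (by linarith), Real.zero_rpow (by linarith)]
    have : (0:ℝ) ≤ a ^ p := Real.rpow_nonneg ha p
    linarith
  · have hs : (-1:ℝ) ≤ a / b - 1 := by
      have : 0 ≤ a / b := div_nonneg ha hb0.le
      linarith
    have hbern := one_add_mul_self_le_rpow_one_add hs (by linarith : (1:ℝ) ≤ p)
    have h1 : (1 + (a / b - 1)) = a / b := by ring
    rw [h1, Real.div_rpow ha hb0.le] at hbern
    have hbp : 0 < b ^ p := Real.rpow_pos_of_pos hb0 p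
    have hkey : b ^ p * (1 + p * (a / b - 1)) ≤ a ^ p := by
      calc b ^ p * (1 + p * (a / b - 1)) ≤ b ^ p * (a ^ p / b ^ p) :=
            mul_le_mul_of_nonneg_left hbern hbp.le
        _ = a ^ p := by field_simp
    have hb1 : b ^ (p - 1) = b ^ p / b := Real.rpow_sub_one hb0.ne' p
    have heq : b ^ p * (1 + p * (a / b - 1)) = b ^ p + p * (b ^ p / b) * (a - b) := by
      field_simp
    rw [hb1]
    linarith [heq ▸ hkey]

lemma lemB {b t p : ℝ} (hb : 0 ≤ b) (ht : 0 ≤ t) (hp : 2 ≤ p) :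
    b ^ p + p * b ^ (p - 1) * t + t ^ p ≤ (b + t) ^ p := by
  rcases eq_or_lt_of_le hb with h0 | hb0
  · rw [← h0, Real.zero_rpow (by linarith), Real.zero_rpow (by linarith), zero_add]
    simp
  · have h2 : (0:ℝ) ≤ b^2 + 2*b*t := by positivity
    have ht2 : (0:ℝ) ≤ t^2 := sq_nonneg t
    have hp2 : (1:ℝ) ≤ p / 2 := by linarith
    have hsup := superadd h2 ht2 hp2
    have hsum : b^2 + 2*b*t + t^2 = (b+t)^2 := by ring
    rw [hsum] at hsup
    have e1 : ((b+t)^2 : ℝ) ^ (p/2) = (b+t) ^ p := by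
      rw [← Real.rpow_natCast (b+t) 2, ← Real.rpow_mul (by linarith)]
      congr 1; push_cast; ring
    have e2 : (t^2 : ℝ) ^ (p/2) = t ^ p := by
      rw [← Real.rpow_natCast t 2, ← Real.rpow_mul ht]
      congr 1; push_cast; ring
    rw [e1, e2] at hsup
    have hs : (-1:ℝ) ≤ 2*t/b := by
      have : (0:ℝ) ≤ 2*t/b := by positivity
      linarith
    have hbern := one_add_mul_self_le_rpow_one_add hs hp2
    have hsplit : b^2 + 2*b*t = b^2 * (1 + 2*t/b) := by field_simp
    have hfac : (b^2 + 2*b*t) ^ (p/2) = (b^2:ℝ)^(p/2) * (1 + 2*t/b)^(p/2) := by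
      rw [hsplit, Real.mul_rpow (by positivity) (by linarith)]
    have eb : (b^2 : ℝ) ^ (p/2) = b ^ p := by
      rw [← Real.rpow_natCast b 2, ← Real.rpow_mul hb]
      congr 1; push_cast; ring
    have hbp : (0:ℝ) < b ^ p := Real.rpow_pos_of_pos hb0 p
    have hlow : b ^ p + p * b ^ (p-1) * t ≤ (b^2 + 2*b*t) ^ (p/2) := by
      rw [hfac, eb]
      calc b ^ p + p * b ^ (p-1) * t = b ^ p * (1 + p/2 * (2*t/b)) := by
            rw [Real.rpow_sub_one hb0.ne' p]; field_simp
        _ ≤ b ^ p * (1 + 2*t/b) ^ (p/2) := mul_le_mul_of_nonneg_left hbern hbp.le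
    linarith


lemma assemble {q p a b G S : ℝ} (hq1 : 1 < q) (hq2 : q ≤ 2) (hp : 2 ≤ p)
    (ha : 0 ≤ a) (hb : 0 ≤ b) (hG : 0 ≤ G)
    (h1 : b + S + (q - 1) / 4 * G ≤ a) (h2 : G ≤ 4 * a + 5 * b) :
    p * (q - 1) / 20 * b ^ (p - 1) * G + ((q - 1) / 100) ^ p * G ^ p ≤
      a ^ p - b ^ p - p * b ^ (p - 1) * S := by
  have hq0 : (0:ℝ) < q - 1 := by linarith
  have hB1 : (0:ℝ) ≤ b ^ (p-1) := Real.rpow_nonneg hb _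
  have hpsi : 0 ≤ a ^ p - b ^ p - p * b ^ (p-1) * (a - b) := by
    have := lemC ha hb hp
    linarith
  have hT : a ^ p - b ^ p - p * b ^ (p-1) * (a - b) + p * ((q-1)/4) * b^(p-1) * G ≤
      a ^ p - b ^ p - p * b ^ (p-1) * S := by
    have hd : S + (q-1)/4 * G ≤ a - b := by linarith
    nlinarith [mul_le_mul_of_nonneg_left hd (by positivity : (0:ℝ) ≤ p * b ^ (p-1))]
  have key : ((q - 1) / 100) ^ p * G ^ p ≤
      (a ^ p - b ^ p - p * b ^ (p-1) * (a - b)) + p * ((q-1)/5) * b^(p-1) * G := by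
    rcases le_or_gt G (10 * b) with hcase | hcase
    · rcases eq_or_lt_of_le hG with h0 | hG0
      · rw [← h0, Real.zero_rpow (by linarith : p ≠ 0)]
        have : p * ((q-1)/5) * b^(p-1) * G = 0 := by rw [← h0]; ring
        linarith
      · have eG : G ^ p = G ^ (p-1) * G := by
          rw [← Real.rpow_add_one hG0.ne' (p-1)]; ring_nf
        have hmono : G ^ (p-1) ≤ (10*b) ^ (p-1) :=
          Real.rpow_le_rpow hG0.le hcase (by linarith)
        have e10 : ((10:ℝ)*b) ^ (p-1) = (10:ℝ)^(p-1) * b^(p-1) :=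
          Real.mul_rpow (by norm_num) hb
        have ec : ((q-1)/100) ^ p = ((q-1)/100) ^ (p-1) * ((q-1)/100) := by
          rw [← Real.rpow_add_one (ne_of_gt (by linarith : (0:ℝ) < (q-1)/100)) (p-1)]
          ring_nf
        have emul : ((q-1)/100) ^ (p-1) * (10:ℝ)^(p-1) = ((q-1)/10) ^ (p-1) := by
          rw [← Real.mul_rpow (by linarith) (by norm_num)]
          congr 1; ring
        have hle1 : ((q-1)/10 : ℝ) ^ (p-1) ≤ 1 :=
          Real.rpow_le_one (by linarith) (by linarith) (by linarith)
        have hGB : (0:ℝ) ≤ b^(p-1) * G := mul_nonneg hB1 hG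
        have hcoef : ((q-1):ℝ)/100 ≤ p * ((q-1)/5) := by nlinarith
        have hlast : 1 * ((q-1)/100) * (b^(p-1) * G) ≤ p * ((q-1)/5) * b^(p-1) * G := by
          nlinarith [mul_le_mul_of_nonneg_right hcoef hGB]
        calc ((q - 1) / 100) ^ p * G ^ p
            = ((q-1)/100) ^ (p-1) * ((q-1)/100) * (G^(p-1) * G) := by rw [eG, ec]
          _ ≤ ((q-1)/100) ^ (p-1) * ((q-1)/100) * ((10:ℝ)^(p-1) * b^(p-1) * G) := by
              apply mul_le_mul_of_nonneg_left _
                (mul_nonneg (Real.rpow_nonneg (by linarith) _) (by linarith))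
              rw [← e10]
              exact mul_le_mul_of_nonneg_right hmono hG
          _ = ((q-1)/10) ^ (p-1) * ((q-1)/100) * (b^(p-1) * G) := by
              rw [← emul]; ring
          _ ≤ 1 * ((q-1)/100) * (b^(p-1) * G) := by
              apply mul_le_mul_of_nonneg_right _ hGB
              exact mul_le_mul_of_nonneg_right hle1 (by linarith)
          _ ≤ p * ((q-1)/5) * b^(p-1) * G := hlast
          _ ≤ _ := by linarith
    · have hDel : G / 40 ≤ a - b := by linarith
      have hDnn : (0:ℝ) ≤ a - b := le_trans (div_nonneg hG (by norm_num)) hDel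
      have hpsiB := lemB hb hDnn hp
      rw [show b + (a - b) = a by ring] at hpsiB
      have h40 : ((q-1)/100) * G ≤ (a-b) := by
        nlinarith [mul_nonneg (by linarith : (0:ℝ) ≤ 2 - q) hG]
      have hstep : ((q-1)/100 * G) ^ p ≤ (a-b) ^ p :=
        Real.rpow_le_rpow (mul_nonneg (by linarith) hG) h40 (by linarith)
      have hmulr : ((q-1)/100) ^ p * G ^ p = ((q-1)/100 * G) ^ p :=
        (Real.mul_rpow (by linarith) hG).symm
      have hGB : (0:ℝ) ≤ p * ((q-1)/5) * b^(p-1) * G := by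
        apply mul_nonneg (mul_nonneg (mul_nonneg (by linarith) (by linarith)) hB1) hG
      rw [hmulr]
      linarith
  have e : p*((q-1)/4)*b^(p-1)*G = p*(q-1)/20*b^(p-1)*G + p*((q-1)/5)*b^(p-1)*G := by ring
  linarith [key, hT, e]


lemma dA {u : ℝ} (h0 : 0 < u) (h1 : u < 1) (hq1 : 1 < q) (hq2 : q ≤ 2) :
    1 + (q-1)/4 * u ≤ (1+u) ^ (q-1) := by
  have h1u : (0:ℝ) < 1 + u := by linarith
  have hinv : (0:ℝ) < (1+u)⁻¹ := by positivity
  have hlog1 := Real.log_le_sub_one_of_pos hinv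
  rw [Real.log_inv] at hlog1
  have hlog2 : 1 - (1+u)⁻¹ ≤ Real.log (1+u) := by linarith
  have e : 1 - (1+u)⁻¹ = u / (1+u) := by field_simp; ring
  have hdiv : u / 2 ≤ u / (1+u) := by
    rw [div_le_div_iff₀ (by norm_num) h1u]; nlinarith
  have hlog : u / 2 ≤ Real.log (1+u) := by rw [e] at hlog2; linarith
  have hexp : 1 + Real.log (1+u) * (q-1) ≤ Real.exp (Real.log (1+u) * (q-1)) := by
    linarith [Real.add_one_le_exp (Real.log (1+u) * (q-1))]
  rw [Real.rpow_def_of_pos h1u]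
  have hlq : u/2 * (q-1) ≤ Real.log (1+u) * (q-1) :=
    mul_le_mul_of_nonneg_right hlog (by linarith)
  nlinarith

lemma dC {u : ℝ} (h0 : -1 < u) (h1 : u < 0) (hq1 : 1 < q) (hq2 : q ≤ 2) :
    (1+u) ^ (q-1) ≤ 1 + (q-1)/4 * u := by
  have hb := rpow_one_add_le_one_add_mul_self (le_of_lt h0)
    (by linarith : (0:ℝ) ≤ q-1) (by linarith : q-1 ≤ 1)
  nlinarith

lemma dB {u : ℝ} (h1 : 1 < u) (hq1 : 1 < q) (hq2 : q ≤ 2) :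
    1 + (q-1)/4 * u ^ (q-1) ≤ (1+u) ^ (q-1) := by
  have hu0 : (0:ℝ) < u := by linarith
  have hX : (0:ℝ) ≤ u ^ (q-1) := Real.rpow_nonneg hu0.le _
  rcases le_or_gt (u ^ (q-1)) 2 with hc | hc
  · have h2 : (2:ℝ) ^ (q-1) ≤ (1+u) ^ (q-1) :=
      Real.rpow_le_rpow (by norm_num) (by linarith) (by linarith)
    have hlog : 1 + Real.log 2 * (q-1) ≤ (2:ℝ) ^ (q-1) := by
      rw [Real.rpow_def_of_pos (by norm_num)]
      linarith [Real.add_one_le_exp (Real.log 2 * (q-1))]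
    have hl2 : (0.6931471803 : ℝ) < Real.log 2 := Real.log_two_gt_d9
    nlinarith
  · have h2 : u ^ (q-1) ≤ (1+u) ^ (q-1) :=
      Real.rpow_le_rpow hu0.le (by linarith) (by linarith)
    nlinarith

lemma dD {w : ℝ} (h1 : 1 < w) (hq1 : 1 < q) (hq2 : q ≤ 2) :
    (q-1)/4 * w ^ (q-1) ≤ 1 + (w-1) ^ (q-1) := by
  have hw0 : (0:ℝ) < w := by linarith
  have hX : (0:ℝ) ≤ w ^ (q-1) := Real.rpow_nonneg hw0.le _
  have hY : (0:ℝ) ≤ (w-1) ^ (q-1) := Real.rpow_nonneg (by linarith) _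
  rcases le_or_gt (w ^ (q-1)) 4 with hc | hc
  · nlinarith
  · have hw2 : (2:ℝ) ≤ w := by
      by_contra hlt
      push_neg at hlt
      have e1 : w ^ (q-1) ≤ (2:ℝ) ^ (q-1) :=
        Real.rpow_le_rpow hw0.le hlt.le (by linarith)
      have e2 : (2:ℝ) ^ (q-1) ≤ (2:ℝ) ^ (1:ℝ) :=
        Real.rpow_le_rpow_of_exponent_le (by norm_num) (by linarith)
      rw [Real.rpow_one] at e2
      linarith
    have e3 : (w/2) ^ (q-1) ≤ (w-1) ^ (q-1) :=
      Real.rpow_le_rpow (by positivity) (by linarith) (by linarith)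
    have e4 : (w/2 : ℝ) ^ (q-1) = w ^ (q-1) / 2 ^ (q-1) := Real.div_rpow hw0.le (by norm_num : (0:ℝ) ≤ 2) (q-1)
    have e5 : (2:ℝ) ^ (q-1) ≤ 2 := by
      have := Real.rpow_le_rpow_of_exponent_le (by norm_num : (1:ℝ) ≤ 2)
        (by linarith : q-1 ≤ 1)
      rwa [Real.rpow_one] at this
    have e6 : (0:ℝ) < (2:ℝ) ^ (q-1) := Real.rpow_pos_of_pos (by norm_num) _
    have e7 : w ^ (q-1) / 2 ≤ w ^ (q-1) / 2 ^ (q-1) := by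
      apply div_le_div_of_nonneg_left hX e6 e5
    nlinarith


-- derivative of the quadratic-region function
lemma hasDerivFA (hq1 : 1 < q) {v : ℝ} (hv : -1 < v) :
    HasDerivAt (fun v : ℝ => (1+v)^q - q*v - (q-1)/4*(q/2*v^2))
      (q*(1+v)^(q-1) - q - (q-1)/4*(q/2*(2*v))) v := by
  have h1 : HasDerivAt (fun v : ℝ => 1 + v) 1 v := (hasDerivAt_id v).const_add 1
  have h2 : HasDerivAt (fun v : ℝ => (1+v)^q) (q*(1+v)^(q-1)*1) v := by
    exact (Real.hasDerivAt_rpow_const (p := q) (Or.inl (by linarith))).comp v h1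
  have h3 : HasDerivAt (fun v : ℝ => q*v) (q*1) v := (hasDerivAt_id v).const_mul q
  have h4 : HasDerivAt (fun v : ℝ => (q-1)/4*(q/2*v^2)) ((q-1)/4*(q/2*(2*v))) v := by
    exact (((hasDerivAt_pow 2 v).const_mul (q/2)).const_mul ((q-1)/4)).congr_deriv
      (by norm_num)
  exact ((h2.sub h3).sub h4).congr_deriv (by ring)

lemma regA (hq1 : 1 < q) (hq2 : q ≤ 2) {u : ℝ} (h0 : 0 ≤ u) (h1 : u ≤ 1) :
    1 + q*u + (q-1)/4*(q/2*u^2) ≤ (1+u)^q := by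
  set F : ℝ → ℝ := fun v => (1+v)^q - q*v - (q-1)/4*(q/2*v^2) with hF
  have mono : MonotoneOn F (Icc 0 1) := by
    apply monotoneOn_of_deriv_nonneg (convex_Icc 0 1)
    · intro v hv
      exact (hasDerivFA hq1 (by linarith [hv.1] : (-1:ℝ) < v)).continuousAt.continuousWithinAt
    · intro v hv
      rw [interior_Icc] at hv
      exact (hasDerivFA hq1 (by linarith [hv.1])).differentiableAt.differentiableWithinAt
    · intro v hv
      rw [interior_Icc] at hv
      rw [(hasDerivFA hq1 (by linarith [hv.1])).deriv]
      have := dA hv.1 hv.2 hq1 hq2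
      nlinarith [hv.1.le, this]
  have h01 : (0:ℝ) ∈ Icc (0:ℝ) 1 := by constructor <;> norm_num
  have hu1 : u ∈ Icc (0:ℝ) 1 := ⟨h0, h1⟩
  have := mono h01 hu1 h0
  have hF0 : F 0 = 1 := by simp [hF]
  rw [hF0] at this
  simp only [hF] at this
  linarith

lemma regC (hq1 : 1 < q) (hq2 : q ≤ 2) {u : ℝ} (h0 : -1 ≤ u) (h1 : u ≤ 0) :
    1 + q*u + (q-1)/4*(q/2*u^2) ≤ (1+u)^q := by
  set F : ℝ → ℝ := fun v => (1+v)^q - q*v - (q-1)/4*(q/2*v^2) with hF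
  have anti : AntitoneOn F (Icc (-1) 0) := by
    apply antitoneOn_of_deriv_nonpos (convex_Icc (-1) 0)
    · intro v hv
      rcases eq_or_lt_of_le hv.1 with he | hlt
      · -- v = -1 : continuity via continuousAt_rpow_const
        subst he
        apply ContinuousWithinAt.sub
        apply ContinuousWithinAt.sub
        · have hc : ContinuousAt (fun v : ℝ => (1+v)^q) (-1) := by
            have hbase : ContinuousAt (fun v : ℝ => 1 + v) (-1) :=
              (continuous_const.add continuous_id).continuousAt
            have hr : ContinuousAt (fun x : ℝ => x ^ q) ((fun v : ℝ => 1+v) (-1)) := by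
              simp only [add_neg_cancel]
              exact Real.continuousAt_rpow_const 0 q (Or.inr (by linarith))
            exact hr.comp hbase
          exact hc.continuousWithinAt
        · exact ((continuous_const.mul continuous_id).continuousAt).continuousWithinAt
        · exact (Continuous.continuousAt (by continuity)).continuousWithinAt
      · exact (hasDerivFA hq1 hlt).continuousAt.continuousWithinAt
    · intro v hv
      rw [interior_Icc] at hv
      exact (hasDerivFA hq1 hv.1).differentiableAt.differentiableWithinAt
    · intro v hv
      rw [interior_Icc] at hv
      rw [(hasDerivFA hq1 hv.1).deriv]
      have := dC hv.1 hv.2 hq1 hq2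
      nlinarith [hv.2.le, this]
  have h01 : (0:ℝ) ∈ Icc (-1:ℝ) 0 := by constructor <;> norm_num
  have hu1 : u ∈ Icc (-1:ℝ) 0 := ⟨h0, h1⟩
  have := anti hu1 h01 h1
  have hF0 : F 0 = 1 := by simp [hF]
  rw [hF0] at this
  simp only [hF] at this
  linarith


lemma two_q_bound (hq1 : 1 < q) (hq2 : q ≤ 2) : 1 + q + q*(q-1)/8 ≤ (2:ℝ)^q := by
  have e1 : (2:ℝ)^q = 2 * 2^(q-1) := by
    have : (2:ℝ)^(1:ℝ) * 2^(q-1) = 2^q := by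
      rw [← Real.rpow_add (by norm_num : (0:ℝ) < 2)]; norm_num
    rw [Real.rpow_one] at this
    linarith
  have e2 : 1 + Real.log 2 * (q-1) ≤ (2:ℝ)^(q-1) := by
    rw [Real.rpow_def_of_pos (by norm_num)]
    linarith [Real.add_one_le_exp (Real.log 2 * (q-1))]
  have hl2 : (0.6931471803 : ℝ) < Real.log 2 := Real.log_two_gt_d9
  nlinarith

lemma hasDerivFB (hq1 : 1 < q) {v : ℝ} (hv : 0 < v) :
    HasDerivAt (fun v : ℝ => (1+v)^q - q*v - (q-1)/4*(v^q - (1-q/2)))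
      (q*(1+v)^(q-1) - q - (q-1)/4*(q*v^(q-1))) v := by
  have h1 : HasDerivAt (fun v : ℝ => 1 + v) 1 v := (hasDerivAt_id v).const_add 1
  have h2 : HasDerivAt (fun v : ℝ => (1+v)^q) (q*(1+v)^(q-1)*1) v :=
    (Real.hasDerivAt_rpow_const (p := q) (Or.inl (by linarith))).comp v h1
  have h3 : HasDerivAt (fun v : ℝ => q*v) (q*1) v := (hasDerivAt_id v).const_mul q
  have h4 : HasDerivAt (fun v : ℝ => (q-1)/4*(v^q - (1-q/2))) ((q-1)/4*(q*v^(q-1))) v := by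
    have h5 : HasDerivAt (fun v : ℝ => v^q) (q*v^(q-1)) v :=
      Real.hasDerivAt_rpow_const (Or.inl hv.ne')
    exact ((h5.sub_const _).const_mul _)
  exact ((h2.sub h3).sub h4).congr_deriv (by ring)

lemma regB (hq1 : 1 < q) (hq2 : q ≤ 2) {u : ℝ} (h1 : 1 ≤ u) :
    1 + q*u + (q-1)/4*(u^q - (1-q/2)) ≤ (1+u)^q := by
  set F : ℝ → ℝ := fun v => (1+v)^q - q*v - (q-1)/4*(v^q - (1-q/2)) with hF
  have mono : MonotoneOn F (Ici 1) := by
    apply monotoneOn_of_deriv_nonneg (convex_Ici 1)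
    · intro v hv
      exact (hasDerivFB hq1 (by simp at hv; linarith)).continuousAt.continuousWithinAt
    · intro v hv
      rw [interior_Ici] at hv
      exact (hasDerivFB hq1 (by simp at hv; linarith)).differentiableAt.differentiableWithinAt
    · intro v hv
      rw [interior_Ici] at hv
      simp only [mem_Ioi] at hv
      rw [(hasDerivFB hq1 (by linarith)).deriv]
      have := dB hv hq1 hq2
      nlinarith [Real.rpow_nonneg (by linarith : (0:ℝ) ≤ v) (q-1)]
  have := mono (self_mem_Ici) (mem_Ici.mpr h1) h1
  have hF1 : F 1 = 2^q - q - (q-1)/4*(1 - (1-q/2)) := by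
    simp [hF, Real.one_rpow]
    norm_num
  rw [hF1] at this
  simp only [hF] at this
  have h2q := two_q_bound hq1 hq2
  nlinarith


lemma hasDerivFD (hq1 : 1 < q) {v : ℝ} (hv : v < -1) :
    HasDerivAt (fun v : ℝ => (-(1+v))^q - q*v - (q-1)/4*((-v)^q - (1-q/2)))
      (-(q*(-(1+v))^(q-1)) - q + (q-1)/4*(q*(-v)^(q-1))) v := by
  have h1 : HasDerivAt (fun v : ℝ => -(1 + v)) (-1) v := by
    exact ((hasDerivAt_id v).const_add 1).neg
  have h2 : HasDerivAt (fun v : ℝ => (-(1+v))^q) (q*(-(1+v))^(q-1)*(-1)) v :=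
    (h1.rpow_const (p := q) (Or.inl (by linarith : (0:ℝ) < -(1+v)).ne')).congr_deriv (by ring)
  have h3 : HasDerivAt (fun v : ℝ => q*v) (q*1) v := (hasDerivAt_id v).const_mul q
  have hneg : HasDerivAt (fun v : ℝ => -v) (-1) v := by
    exact (hasDerivAt_id v).neg
  have h5 : HasDerivAt (fun v : ℝ => (-v)^q) (q*(-v)^(q-1)*(-1)) v :=
    (Real.hasDerivAt_rpow_const (p := q) (Or.inl (by linarith : -v ≠ 0))).comp v hneg
  have h4 : HasDerivAt (fun v : ℝ => (q-1)/4*((-v)^q - (1-q/2)))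
      ((q-1)/4*(q*(-v)^(q-1)*(-1))) v := (h5.sub_const _).const_mul _
  exact ((h2.sub h3).sub h4).congr_deriv (by ring)

lemma regD (hq1 : 1 < q) (hq2 : q ≤ 2) {u : ℝ} (h1 : u ≤ -1) :
    1 + q*u + (q-1)/4*((-u)^q - (1-q/2)) ≤ (-(1+u))^q := by
  set F : ℝ → ℝ := fun v => (-(1+v))^q - q*v - (q-1)/4*((-v)^q - (1-q/2)) with hF
  have anti : AntitoneOn F (Iic (-1)) := by
    apply antitoneOn_of_deriv_nonpos (convex_Iic (-1))
    · intro v hv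
      simp only [mem_Iic] at hv
      rcases eq_or_lt_of_le hv with he | hlt
      · subst he
        have hbase : ContinuousAt (fun v : ℝ => -(1 + v)) (-1) := by fun_prop
        have hr : ContinuousAt (fun x : ℝ => x ^ q) (0:ℝ) :=
          Real.continuousAt_rpow_const 0 q (Or.inr (by linarith))
        have hr' : ContinuousAt (fun x : ℝ => x ^ q) ((fun v : ℝ => -(1+v)) (-1)) := by
          simpa using hr
        have hc1 : ContinuousAt (fun v : ℝ => (-(1+v))^q) (-1) := by
          have := ContinuousAt.comp (g := fun x : ℝ => x ^ q)
            (f := fun v : ℝ => -(1+v)) hr' hbase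
          exact this
        have hbase2 : ContinuousAt (fun v : ℝ => -v) (-1:ℝ) := by fun_prop
        have hr2 : ContinuousAt (fun x : ℝ => x ^ q) ((fun v : ℝ => -v) (-1)) := by
          simp only
          exact Real.continuousAt_rpow_const _ q (Or.inl (by norm_num))
        have hc2 : ContinuousAt (fun v : ℝ => (-v)^q) (-1:ℝ) := by
          have := ContinuousAt.comp (g := fun x : ℝ => x ^ q)
            (f := fun v : ℝ => -v) hr2 hbase2
          exact this
        have : ContinuousAt F (-1:ℝ) := by
          rw [hF]
          exact (hc1.sub ((continuous_const.mul continuous_id).continuousAt)).sub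
            ((hc2.sub continuousAt_const).const_mul _)
        exact this.continuousWithinAt
      · exact (hasDerivFD hq1 hlt).continuousAt.continuousWithinAt
    · intro v hv
      rw [interior_Iic] at hv
      exact (hasDerivFD hq1 hv).differentiableAt.differentiableWithinAt
    · intro v hv
      rw [interior_Iic] at hv
      simp only [mem_Iio] at hv
      rw [(hasDerivFD hq1 hv).deriv]
      have hdd := dD (by linarith : (1:ℝ) < -v) hq1 hq2
      have e : (-v - 1 : ℝ) = -(1+v) := by ring
      rw [e] at hdd
      nlinarith
  have := anti (mem_Iic.mpr h1) (self_mem_Iic) h1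
  have hF1 : F (-1) = q - (q-1)/4*(1 - (1-q/2)) := by
    simp [hF, Real.one_rpow, Real.zero_rpow (by linarith : q ≠ 0)]
    try ring
  rw [hF1] at this
  simp only [hF] at this
  nlinarith


lemma core (hq1 : 1 < q) (hq2 : q ≤ 2) (u : ℝ) :
    1 + q*u + (q-1)/4 * gammaQ q u 1 ≤ |1+u| ^ q := by
  unfold gammaQ
  by_cases habs : |u| ≤ 1
  · rw [if_pos habs]
    obtain ⟨hl, hr⟩ := abs_le.mp habs
    have habs1 : |1+u| = 1+u := abs_of_nonneg (by linarith)
    rw [habs1, Real.one_rpow]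
    rcases le_or_gt 0 u with hu | hu
    · have := regA hq1 hq2 hu hr
      nlinarith
    · have := regC hq1 hq2 hl hu.le
      nlinarith
  · rw [if_neg habs]
    push_neg at habs
    rcases lt_abs.mp habs with hu | hu
    · have habs1 : |1+u| = 1+u := abs_of_nonneg (by linarith)
      have habsu : |u| = u := abs_of_nonneg (by linarith)
      rw [habs1, habsu, Real.one_rpow]
      have := regB hq1 hq2 hu.le
      nlinarith
    · -- -u > 1, i.e. u < -1
      have hu' : u < -1 := by linarith
      have habs1 : |1+u| = -(1+u) := abs_of_neg (by linarith)
      have habsu : |u| = -u := abs_of_neg (by linarith)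
      rw [habs1, habsu, Real.one_rpow]
      have := regD hq1 hq2 hu'.le
      nlinarith

-- unscaled scalar lemma
lemma scalar (hq1 : 1 < q) (hq2 : q ≤ 2) {f : ℝ} (hf : 0 < f) (y : ℝ) :
    f^q + q * f^(q-1) * y + (q-1)/4 * gammaQ q y f ≤ |f + y| ^ q := by
  set u := y / f with hu
  have hy : y = f * u := by rw [hu]; field_simp
  have hfq : (0:ℝ) < f ^ q := Real.rpow_pos_of_pos hf q
  -- |f+y|^q = f^q * |1+u|^q
  have e1 : |f + y| ^ q = f^q * |1+u|^q := by
    rw [hy, show f + f*u = f*(1+u) by ring, abs_mul, abs_of_pos hf,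
      Real.mul_rpow hf.le (abs_nonneg _)]
  -- f^(q-1)*y = f^q * u
  have e2 : f^(q-1) * y = f^q * u := by
    rw [hy, Real.rpow_sub_one hf.ne' q]
    field_simp
  -- gammaQ scaling
  have e3 : gammaQ q y f = f^q * gammaQ q u 1 := by
    unfold gammaQ
    have hiff : |y| ≤ f ↔ |u| ≤ 1 := by
      rw [hy, abs_mul, abs_of_pos hf]
      constructor
      · intro h; nlinarith [abs_nonneg u, (mul_le_iff_le_one_right hf).mp h]
      · intro h; nlinarith [abs_nonneg u]
    by_cases hcase : |y| ≤ f
    · rw [if_pos hcase, if_pos (hiff.mp hcase), Real.one_rpow]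
      have hf2 : f^(2:ℝ) = f^(2:ℕ) := by
        rw [show (2:ℝ) = ((2:ℕ):ℝ) by norm_num, Real.rpow_natCast]
      have key : f ^ (q-2) * f^(2:ℕ) = f ^ q := by
        rw [← hf2, ← Real.rpow_add hf]; norm_num
      rw [hy, mul_pow]
      linear_combination (q/2 * u^2) * key
    · rw [if_neg hcase, if_neg (fun h => hcase (hiff.mpr h)), Real.one_rpow]
      rw [hy, abs_mul, abs_of_pos hf, Real.mul_rpow hf.le (abs_nonneg _)]
      ring
  have hcore := core hq1 hq2 u
  calc f^q + q * f^(q-1) * y + (q-1)/4 * gammaQ q y f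
      = f^q * (1 + q*u + (q-1)/4 * gammaQ q u 1) := by
        rw [e3]; linear_combination q * e2
    _ ≤ f^q * (|1+u|^q) := by
        exact mul_le_mul_of_nonneg_left hcore hfq.le
    _ = |f + y| ^ q := e1.symm

lemma gamma_nonneg (hq1 : 1 < q) (hq2 : q ≤ 2) {f : ℝ} (hf : 0 < f) (y : ℝ) :
    0 ≤ gammaQ q y f := by
  unfold gammaQ
  by_cases hcase : |y| ≤ f
  · rw [if_pos hcase]
    have : (0:ℝ) < f ^ (q-2) := Real.rpow_pos_of_pos hf _
    positivity
  · rw [if_neg hcase]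
    push_neg at hcase
    have h1 : f ^ q ≤ |y| ^ q := Real.rpow_le_rpow hf.le hcase.le (by linarith)
    have h2 : (0:ℝ) < f ^ q := Real.rpow_pos_of_pos hf q
    nlinarith

lemma gamma_upper (hq1 : 1 < q) (hq2 : q ≤ 2) {f : ℝ} (hf : 0 < f) (y : ℝ) :
    gammaQ q y f ≤ 5 * f^q + 4 * |f + y|^q := by
  have hfq : (0:ℝ) < f ^ q := Real.rpow_pos_of_pos hf q
  have hA : (0:ℝ) ≤ |f+y| ^ q := Real.rpow_nonneg (abs_nonneg _) q
  unfold gammaQ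
  by_cases hcase : |y| ≤ f
  · rw [if_pos hcase]
    have hb : (0:ℝ) < f ^ (q-2) := Real.rpow_pos_of_pos hf _
    have hy2 : y^2 ≤ f^2 := by nlinarith [abs_nonneg y, sq_abs y]
    have hf2 : f^(2:ℝ) = f^(2:ℕ) := by
      rw [show (2:ℝ) = ((2:ℕ):ℝ) by norm_num, Real.rpow_natCast]
    have key : f ^ (q-2) * f^(2:ℕ) = f ^ q := by
      rw [← hf2, ← Real.rpow_add hf]; norm_num
    nlinarith [mul_le_mul_of_nonneg_left hy2 hb.le, key]
  · rw [if_neg hcase]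
    push_neg at hcase
    -- |y| ≤ f + |f+y| ≤ 2 * max
    have htri : |y| ≤ f + |f+y| := by
      have : y = (f+y) - f := by ring
      calc |y| = |(f+y) - f| := by rw [← this]
        _ ≤ |f+y| + |f| := abs_sub _ _
        _ = f + |f+y| := by rw [abs_of_pos hf]; ring
    set M := max f |f+y| with hM
    have hM0 : 0 < M := lt_max_of_lt_left hf
    have htri2 : |y| ≤ 2 * M := by
      have := le_max_left f |f+y|
      have := le_max_right f |f+y|
      linarith
    have h1 : |y| ^ q ≤ (2*M) ^ q :=
      Real.rpow_le_rpow (abs_nonneg _) htri2 (by linarith)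
    have h2 : (2*M:ℝ) ^ q = 2^q * M^q := Real.mul_rpow (by norm_num) hM0.le
    have h3 : (2:ℝ)^q ≤ 4 := by
      have := Real.rpow_le_rpow_of_exponent_le (by norm_num : (1:ℝ) ≤ 2) hq2
      calc (2:ℝ)^q ≤ 2^(2:ℝ) := this
        _ = 4 := by
          rw [show (2:ℝ) = ((2:ℕ):ℝ) by norm_num, Real.rpow_natCast]; norm_num
    have h4 : M ^ q ≤ f^q + |f+y|^q := by
      rcases max_cases f |f+y| with ⟨he, _⟩ | ⟨he, _⟩ <;> rw [← hM] at he <;>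
        rw [he] <;> nlinarith
    have hMq : (0:ℝ) ≤ M ^ q := Real.rpow_nonneg hM0.le q
    nlinarith [mul_le_mul_of_nonneg_right h3 hMq]

end Aux

theorem stmt6 (q p : ℝ) (hq1 : 1 < q) (hq2 : q ≤ 2) (hp : 2 ≤ p) (d : ℕ)
    (x y : Fin d → ℝ) (hx : ∀ j, 0 < x j) :
    (p * (q - 1) / 20) * normQ q x ^ ((p - 1) * q) * (∑ j, gammaQ q (y j) (x j)) +
      ((q - 1) / 100) ^ p * (∑ j, gammaQ q (y j) (x j)) ^ p ≤
    normQ q (x + y) ^ (p * q) - normQ q x ^ (p * q) -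
      p * q * normQ q x ^ ((p - 1) * q) * ∑ j, x j ^ (q - 1) * y j := by
  have hq0 : (0:ℝ) < q := by linarith
  set A : ℝ := ∑ j, |x j + y j| ^ q with hA
  set B : ℝ := ∑ j, |x j| ^ q with hB
  set G : ℝ := ∑ j, gammaQ q (y j) (x j) with hG
  set L : ℝ := ∑ j, x j ^ (q-1) * y j with hL
  have hAnn : 0 ≤ A := Finset.sum_nonneg fun j _ => Real.rpow_nonneg (abs_nonneg _) q
  have hBnn : 0 ≤ B := Finset.sum_nonneg fun j _ => Real.rpow_nonneg (abs_nonneg _) q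
  have hGnn : 0 ≤ G := Finset.sum_nonneg fun j _ => gamma_nonneg hq1 hq2 (hx j) (y j)
  -- norm rewrites
  have hnx : normQ q x = B ^ (1/q) := rfl
  have hnxy : normQ q (x+y) = (∑ j, |x j + y j| ^ q) ^ (1/q) := by
    unfold normQ
    congr 1
  have e1 : normQ q x ^ ((p-1)*q) = B ^ (p-1) := by
    rw [hnx, ← Real.rpow_mul hBnn]
    congr 1
    field_simp
  have e2 : normQ q x ^ (p*q) = B ^ p := by
    rw [hnx, ← Real.rpow_mul hBnn]
    congr 1
    field_simp
  have e3 : normQ q (x+y) ^ (p*q) = A ^ p := by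
    rw [hnxy, ← hA, ← Real.rpow_mul hAnn]
    congr 1
    field_simp
  have hBx : B = ∑ j, x j ^ q := by
    apply Finset.sum_congr rfl
    intro j _
    rw [abs_of_pos (hx j)]
  -- summed scalar inequality
  have hsum1 : B + q * L + (q-1)/4 * G ≤ A := by
    have hstep := Finset.sum_le_sum (s := Finset.univ)
      (f := fun j => x j ^ q + q * (x j ^(q-1) * y j) + (q-1)/4 * gammaQ q (y j) (x j))
      (g := fun j => |x j + y j| ^ q)
      (fun j _ => by have := scalar hq1 hq2 (hx j) (y j); linarith)
    rw [Finset.sum_add_distrib, Finset.sum_add_distrib, ← Finset.mul_sum,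
      ← Finset.mul_sum] at hstep
    rw [hBx, hL, hG]
    exact hstep
  have hsum2 : G ≤ 4 * A + 5 * B := by
    have hstep := Finset.sum_le_sum (s := Finset.univ)
      (f := fun j => gammaQ q (y j) (x j))
      (g := fun j => 5 * x j ^ q + 4 * |x j + y j| ^ q)
      (fun j _ => gamma_upper hq1 hq2 (hx j) (y j))
    rw [Finset.sum_add_distrib, ← Finset.mul_sum, ← Finset.mul_sum] at hstep
    rw [hG, ← hBx] at *
    rw [hA]
    linarith [hstep]
  have hmain := assemble (S := q * L) hq1 hq2 hp hAnn hBnn hGnn hsum1 hsum2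
  rw [e1, e2, e3]
  nlinarith [hmain]
end
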